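/- Let P, M ⊆ (0, a*) be measurable sets with Lebesgue measure |P| > 0 and |M ∩ (t, a*)| > 0 for every t ∈ (0, a*). Then the function h(t) = |P ∩ (M - t)| (Lebesgue measure of the intersection of P with M translated by -t) satisfies ∫₀^{a*} h(t)dt > 0; consequently h(t) > 0 for all t in a subset of (0, a*) of positive measure. -/

import Mathlib

open MeasureTheory Real Set
open scoped ENNReal

/-- if `P` has positive measure and `M` meets every right tail of
`(0, a*)` in positive measure, then `h(t) = |P ∩ (M - t)|` has positive integral,
and is positive on a set of positive measure. -/
theorem translate_intersection_positive
    (astar : ℝ) (hastar : 0 < astar)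
    (P M : Set ℝ) (hPmeas : MeasurableSet P) (hMmeas : MeasurableSet M)
    (hP : P ⊆ Ioo 0 astar) (hM : M ⊆ Ioo 0 astar)
    (hPpos : 0 < volume P)
    (hMpos : ∀ t : ℝ, t ∈ Ioo 0 astar → 0 < volume (M ∩ Ioo t astar)) :
    (0 < ∫⁻ t in Ioc (0:ℝ) astar, volume (P ∩ {s : ℝ | s + t ∈ M})) ∧
    0 < volume {t : ℝ | t ∈ Ioo 0 astar ∧ 0 < volume (P ∩ {s : ℝ | s + t ∈ M})} := by
  classical
  set f : ℝ → ℝ → ℝ≥0∞ := fun t s => P.indicator 1 s * M.indicator 1 (s + t) with hfdef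
  have hfm : Measurable (Function.uncurry f) := by
    apply Measurable.mul
    · exact (measurable_one.indicator hPmeas).comp measurable_snd
    · exact (measurable_one.indicator hMmeas).comp (measurable_snd.add measurable_fst)
  have hsetmeas : ∀ t : ℝ, MeasurableSet (P ∩ {s : ℝ | s + t ∈ M}) := fun t =>
    hPmeas.inter (hMmeas.preimage (measurable_id.add_const t))
  have hvol : ∀ t : ℝ, volume (P ∩ {s : ℝ | s + t ∈ M}) = ∫⁻ s, f t s := by
    intro t
    rw [← lintegral_indicator_one (hsetmeas t)]
    congr 1; funext s
    by_cases hs : s ∈ P <;> by_cases hm : s + t ∈ M <;>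
      simp [f, indicator_apply, hs, hm, Set.mem_inter_iff]
  have hpremeas : ∀ s : ℝ, MeasurableSet ((fun t => s + t) ⁻¹' M) := fun s =>
    hMmeas.preimage (measurable_const.add measurable_id)
  have hw : Measurable fun s => ∫⁻ t in Ioc (0:ℝ) astar, f t s :=
    Measurable.lintegral_prod_left hfm
  have hinner : ∀ s : ℝ, (∫⁻ t in Ioc (0:ℝ) astar, f t s)
      = P.indicator 1 s * volume (M ∩ Ioc s (s + astar)) := by
    intro s
    have h1 : ∀ t, f t s = P.indicator 1 s * ((fun t => s + t) ⁻¹' M).indicator 1 t := by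
      intro t; simp [f, indicator_apply]
    simp_rw [h1]
    rw [lintegral_const_mul _ (measurable_one.indicator (hpremeas s))]
    congr 1
    rw [lintegral_indicator_one (hpremeas s),
      Measure.restrict_apply (hpremeas s)]
    have hset : ((fun t => s + t) ⁻¹' M) ∩ Ioc 0 astar
        = (fun t => s + t) ⁻¹' (M ∩ Ioc s (s + astar)) := by
      ext t
      simp only [mem_inter_iff, mem_preimage, mem_Ioc]
      constructor
      · rintro ⟨hm, ht1, ht2⟩; exact ⟨hm, by linarith, by linarith⟩
      · rintro ⟨hm, ht1, ht2⟩; exact ⟨hm, by linarith, by linarith⟩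
    rw [hset, measure_preimage_add]
  have hswap : (∫⁻ t in Ioc (0:ℝ) astar, ∫⁻ s, f t s)
      = ∫⁻ s, ∫⁻ t in Ioc (0:ℝ) astar, f t s :=
    lintegral_lintegral_swap hfm.aemeasurable
  have hMIoc : ∀ s ∈ Ioo 0 astar, 0 < volume (M ∩ Ioc s (s + astar)) := by
    intro s hs
    refine lt_of_lt_of_le (hMpos s hs) (measure_mono ?_)
    rintro m ⟨hmM, hm1, hm2⟩
    exact ⟨hmM, hm1, by linarith [hs.1]⟩
  have hpos1 : 0 < ∫⁻ t in Ioc (0:ℝ) astar, volume (P ∩ {s : ℝ | s + t ∈ M}) := by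
    simp_rw [hvol]
    rw [hswap, lintegral_pos_iff_support hw]
    refine lt_of_lt_of_le hPpos (measure_mono ?_)
    intro s hs
    have hsI : s ∈ Ioo 0 astar := hP hs
    simp only [Function.mem_support, hinner]
    simp only [indicator_of_mem hs, Pi.one_apply, one_mul]
    exact (hMIoc s hsI).ne'
  refine ⟨hpos1, ?_⟩
  by_contra hcon
  push_neg at hcon
  have hzero : volume {t : ℝ | t ∈ Ioo 0 astar ∧ 0 < volume (P ∩ {s : ℝ | s + t ∈ M})} = 0 :=
    le_antisymm hcon zero_le
  have hae : ∀ᵐ t ∂(volume.restrict (Ioo (0:ℝ) astar)),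
      volume (P ∩ {s : ℝ | s + t ∈ M}) = 0 := by
    rw [ae_restrict_iff' measurableSet_Ioo]
    refine measure_mono_null ?_ hzero
    intro t ht
    simp only [mem_compl_iff, mem_setOf_eq, Classical.not_imp] at ht
    simp only [mem_setOf_eq]
    exact ⟨ht.1, pos_iff_ne_zero.mpr ht.2⟩
  have h0 : (∫⁻ t in Ioo (0:ℝ) astar, volume (P ∩ {s : ℝ | s + t ∈ M})) = 0 := by
    rw [lintegral_congr_ae hae, lintegral_zero]
  have heq : (∫⁻ t in Ioo (0:ℝ) astar, volume (P ∩ {s : ℝ | s + t ∈ M}))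
      = ∫⁻ t in Ioc (0:ℝ) astar, volume (P ∩ {s : ℝ | s + t ∈ M}) :=
    setLIntegral_congr Ioo_ae_eq_Ioc
  rw [heq] at h0
  exact absurd h0 hpos1.ne'
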